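/- The connection matrix L of the Möbius–Kantor graph MK (viewed as a real symmetric 40×40 matrix) has exactly 16 positive eigenvalues and exactly 24 negative eigenvalues (and no zero eigenvalue); in particular, its signature 16 − 24 = −8 equals the Euler characteristic |V| − |E| of MK. -/

import Mathlib

/-- The underlying relation of the Möbius–Kantor graph `GP(8,3)`. -/
def mkRel (v w : ZMod 8 × Fin 2) : Bool :=
  (v.2 == 0 && w.2 == 0 && (w.1 == v.1 + 1 || v.1 == w.1 + 1)) ||
  ((v.2 == 0 && w.2 == 1 || v.2 == 1 && w.2 == 0) && v.1 == w.1) ||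
  (v.2 == 1 && w.2 == 1 && (w.1 == v.1 + 3 || v.1 == w.1 + 3))

/-- The Möbius–Kantor graph, i.e. the generalized Petersen graph `GP(8,3)`. -/
def MK : SimpleGraph (ZMod 8 × Fin 2) where
  Adj v w := mkRel v w = true
  symm := ⟨by intro v w; revert v w; decide⟩
  loopless := ⟨by intro v; revert v; decide⟩

instance : DecidableRel MK.Adj := fun v w => inferInstanceAs (Decidable (mkRel v w = true))

/-- A simplex of the (one-dimensional) simplicial complex of `MK`: either a vertex
(a singleton) or an edge (a two-element set of adjacent vertices). -/
def IsMKSimplex (s : Finset (ZMod 8 × Fin 2)) : Prop :=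
  s.card = 1 ∨ ∃ a b, MK.Adj a b ∧ s = {a, b}

instance (s : Finset (ZMod 8 × Fin 2)) : Decidable (IsMKSimplex s) := by
  unfold IsMKSimplex; infer_instance

/-- The type of the 40 simplices (16 vertices and 24 edges) of `MK`. -/
def MKSimplex := {s : Finset (ZMod 8 × Fin 2) // IsMKSimplex s}

instance : Fintype MKSimplex := by unfold MKSimplex; infer_instance
instance : DecidableEq MKSimplex := by unfold MKSimplex; infer_instance

/-- The connection matrix of `MK`: `L x y = 1` if the simplices `x` and `y`
intersect, and `0` otherwise. -/
def connL : Matrix MKSimplex MKSimplex ℤ :=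
  fun x y => if (x.val ∩ y.val).Nonempty then 1 else 0
/-- The connection matrix of `MK` viewed as a real symmetric matrix. -/
def connLR : Matrix MKSimplex MKSimplex ℝ :=
  fun x y => if (x.val ∩ y.val).Nonempty then 1 else 0

open Matrix

section Data

def tblList : List (Finset (ZMod 8 × Fin 2)) := [
{(0,0)},
{(1,0)},
{(2,0)},
{(3,0)},
{(4,0)},
{(5,0)},
{(6,0)},
{(7,0)},
{(0,1)},
{(1,1)},
{(2,1)},
{(3,1)},
{(4,1)},
{(5,1)},
{(6,1)},
{(7,1)},
{(0,0), (1,0)},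
{(1,0), (2,0)},
{(2,0), (3,0)},
{(3,0), (4,0)},
{(4,0), (5,0)},
{(5,0), (6,0)},
{(6,0), (7,0)},
{(0,0), (7,0)},
{(0,0), (0,1)},
{(1,0), (1,1)},
{(2,0), (2,1)},
{(3,0), (3,1)},
{(4,0), (4,1)},
{(5,0), (5,1)},
{(6,0), (6,1)},
{(7,0), (7,1)},
{(0,1), (3,1)},
{(1,1), (4,1)},
{(2,1), (5,1)},
{(3,1), (6,1)},
{(4,1), (7,1)},
{(0,1), (5,1)},
{(1,1), (6,1)},
{(2,1), (7,1)}]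
def Adata : List (List Int) := [[1,0,0,0,0,0,0,0,0,0,0,0,0,0,0,0,1,0,0,0,0,0,0,1,1,0,0,0,0,0,0,0,0,0,0,0,0,0,0,0],
[0,1,0,0,0,0,0,0,0,0,0,0,0,0,0,0,1,1,0,0,0,0,0,0,0,1,0,0,0,0,0,0,0,0,0,0,0,0,0,0],
[0,0,1,0,0,0,0,0,0,0,0,0,0,0,0,0,0,1,1,0,0,0,0,0,0,0,1,0,0,0,0,0,0,0,0,0,0,0,0,0],
[0,0,0,1,0,0,0,0,0,0,0,0,0,0,0,0,0,0,1,1,0,0,0,0,0,0,0,1,0,0,0,0,0,0,0,0,0,0,0,0],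
[0,0,0,0,1,0,0,0,0,0,0,0,0,0,0,0,0,0,0,1,1,0,0,0,0,0,0,0,1,0,0,0,0,0,0,0,0,0,0,0],
[0,0,0,0,0,1,0,0,0,0,0,0,0,0,0,0,0,0,0,0,1,1,0,0,0,0,0,0,0,1,0,0,0,0,0,0,0,0,0,0],
[0,0,0,0,0,0,1,0,0,0,0,0,0,0,0,0,0,0,0,0,0,1,1,0,0,0,0,0,0,0,1,0,0,0,0,0,0,0,0,0],
[0,0,0,0,0,0,0,1,0,0,0,0,0,0,0,0,0,0,0,0,0,0,1,1,0,0,0,0,0,0,0,1,0,0,0,0,0,0,0,0],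
[0,0,0,0,0,0,0,0,1,0,0,0,0,0,0,0,0,0,0,0,0,0,0,0,1,0,0,0,0,0,0,0,1,0,0,0,0,1,0,0],
[0,0,0,0,0,0,0,0,0,1,0,0,0,0,0,0,0,0,0,0,0,0,0,0,0,1,0,0,0,0,0,0,0,1,0,0,0,0,1,0],
[0,0,0,0,0,0,0,0,0,0,1,0,0,0,0,0,0,0,0,0,0,0,0,0,0,0,1,0,0,0,0,0,0,0,1,0,0,0,0,1],
[0,0,0,0,0,0,0,0,0,0,0,1,0,0,0,0,0,0,0,0,0,0,0,0,0,0,0,1,0,0,0,0,1,0,0,1,0,0,0,0],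
[0,0,0,0,0,0,0,0,0,0,0,0,1,0,0,0,0,0,0,0,0,0,0,0,0,0,0,0,1,0,0,0,0,1,0,0,1,0,0,0],
[0,0,0,0,0,0,0,0,0,0,0,0,0,1,0,0,0,0,0,0,0,0,0,0,0,0,0,0,0,1,0,0,0,0,1,0,0,1,0,0],
[0,0,0,0,0,0,0,0,0,0,0,0,0,0,1,0,0,0,0,0,0,0,0,0,0,0,0,0,0,0,1,0,0,0,0,1,0,0,1,0],
[0,0,0,0,0,0,0,0,0,0,0,0,0,0,0,1,0,0,0,0,0,0,0,0,0,0,0,0,0,0,0,1,0,0,0,0,1,0,0,1],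
[1,1,0,0,0,0,0,0,0,0,0,0,0,0,0,0,1,1,0,0,0,0,0,1,1,1,0,0,0,0,0,0,0,0,0,0,0,0,0,0],
[0,1,1,0,0,0,0,0,0,0,0,0,0,0,0,0,1,1,1,0,0,0,0,0,0,1,1,0,0,0,0,0,0,0,0,0,0,0,0,0],
[0,0,1,1,0,0,0,0,0,0,0,0,0,0,0,0,0,1,1,1,0,0,0,0,0,0,1,1,0,0,0,0,0,0,0,0,0,0,0,0],
[0,0,0,1,1,0,0,0,0,0,0,0,0,0,0,0,0,0,1,1,1,0,0,0,0,0,0,1,1,0,0,0,0,0,0,0,0,0,0,0],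
[0,0,0,0,1,1,0,0,0,0,0,0,0,0,0,0,0,0,0,1,1,1,0,0,0,0,0,0,1,1,0,0,0,0,0,0,0,0,0,0],
[0,0,0,0,0,1,1,0,0,0,0,0,0,0,0,0,0,0,0,0,1,1,1,0,0,0,0,0,0,1,1,0,0,0,0,0,0,0,0,0],
[0,0,0,0,0,0,1,1,0,0,0,0,0,0,0,0,0,0,0,0,0,1,1,1,0,0,0,0,0,0,1,1,0,0,0,0,0,0,0,0],
[1,0,0,0,0,0,0,1,0,0,0,0,0,0,0,0,1,0,0,0,0,0,1,1,1,0,0,0,0,0,0,1,0,0,0,0,0,0,0,0],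
[1,0,0,0,0,0,0,0,1,0,0,0,0,0,0,0,1,0,0,0,0,0,0,1,1,0,0,0,0,0,0,0,1,0,0,0,0,1,0,0],
[0,1,0,0,0,0,0,0,0,1,0,0,0,0,0,0,1,1,0,0,0,0,0,0,0,1,0,0,0,0,0,0,0,1,0,0,0,0,1,0],
[0,0,1,0,0,0,0,0,0,0,1,0,0,0,0,0,0,1,1,0,0,0,0,0,0,0,1,0,0,0,0,0,0,0,1,0,0,0,0,1],
[0,0,0,1,0,0,0,0,0,0,0,1,0,0,0,0,0,0,1,1,0,0,0,0,0,0,0,1,0,0,0,0,1,0,0,1,0,0,0,0],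
[0,0,0,0,1,0,0,0,0,0,0,0,1,0,0,0,0,0,0,1,1,0,0,0,0,0,0,0,1,0,0,0,0,1,0,0,1,0,0,0],
[0,0,0,0,0,1,0,0,0,0,0,0,0,1,0,0,0,0,0,0,1,1,0,0,0,0,0,0,0,1,0,0,0,0,1,0,0,1,0,0],
[0,0,0,0,0,0,1,0,0,0,0,0,0,0,1,0,0,0,0,0,0,1,1,0,0,0,0,0,0,0,1,0,0,0,0,1,0,0,1,0],
[0,0,0,0,0,0,0,1,0,0,0,0,0,0,0,1,0,0,0,0,0,0,1,1,0,0,0,0,0,0,0,1,0,0,0,0,1,0,0,1],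
[0,0,0,0,0,0,0,0,1,0,0,1,0,0,0,0,0,0,0,0,0,0,0,0,1,0,0,1,0,0,0,0,1,0,0,1,0,1,0,0],
[0,0,0,0,0,0,0,0,0,1,0,0,1,0,0,0,0,0,0,0,0,0,0,0,0,1,0,0,1,0,0,0,0,1,0,0,1,0,1,0],
[0,0,0,0,0,0,0,0,0,0,1,0,0,1,0,0,0,0,0,0,0,0,0,0,0,0,1,0,0,1,0,0,0,0,1,0,0,1,0,1],
[0,0,0,0,0,0,0,0,0,0,0,1,0,0,1,0,0,0,0,0,0,0,0,0,0,0,0,1,0,0,1,0,1,0,0,1,0,0,1,0],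
[0,0,0,0,0,0,0,0,0,0,0,0,1,0,0,1,0,0,0,0,0,0,0,0,0,0,0,0,1,0,0,1,0,1,0,0,1,0,0,1],
[0,0,0,0,0,0,0,0,1,0,0,0,0,1,0,0,0,0,0,0,0,0,0,0,1,0,0,0,0,1,0,0,1,0,1,0,0,1,0,0],
[0,0,0,0,0,0,0,0,0,1,0,0,0,0,1,0,0,0,0,0,0,0,0,0,0,1,0,0,0,0,1,0,0,1,0,1,0,0,1,0],
[0,0,0,0,0,0,0,0,0,0,1,0,0,0,0,1,0,0,0,0,0,0,0,0,0,0,1,0,0,0,0,1,0,0,1,0,1,0,0,1]]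
def Cpdata : List (List Int) := [[1,0,0,0,0,0,0,0,0,0,0,0,0,0,0,0],
[0,1,0,0,0,0,0,0,0,0,0,0,0,0,0,0],
[0,0,1,0,0,0,0,0,0,0,0,0,0,0,0,0],
[0,0,0,1,0,0,0,0,0,0,0,0,0,0,0,0],
[0,0,0,0,1,0,0,0,0,0,0,0,0,0,0,0],
[0,0,0,0,0,1,0,0,0,0,0,0,0,0,0,0],
[0,0,0,0,0,0,1,0,0,0,0,0,0,0,0,0],
[0,0,0,0,0,0,0,1,0,0,0,0,0,0,0,0],
[0,0,0,0,0,0,0,0,1,0,0,0,0,0,0,0],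
[0,0,0,0,0,0,0,0,0,1,0,0,0,0,0,0],
[0,0,0,0,0,0,0,0,0,0,1,0,0,0,0,0],
[0,0,0,0,0,0,0,0,0,0,0,1,0,0,0,0],
[0,0,0,0,0,0,0,0,0,0,0,0,1,0,0,0],
[0,0,0,0,0,0,0,0,0,0,0,0,0,1,0,0],
[0,0,0,0,0,0,0,0,0,0,0,0,0,0,1,0],
[0,0,0,0,0,0,0,0,0,0,0,0,0,0,0,1],
[0,0,0,0,0,0,0,0,0,0,0,0,0,0,0,0],
[0,0,0,0,0,0,0,0,0,0,0,0,0,0,0,0],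
[0,0,0,0,0,0,0,0,0,0,0,0,0,0,0,0],
[0,0,0,0,0,0,0,0,0,0,0,0,0,0,0,0],
[0,0,0,0,0,0,0,0,0,0,0,0,0,0,0,0],
[0,0,0,0,0,0,0,0,0,0,0,0,0,0,0,0],
[0,0,0,0,0,0,0,0,0,0,0,0,0,0,0,0],
[0,0,0,0,0,0,0,0,0,0,0,0,0,0,0,0],
[0,0,0,0,0,0,0,0,0,0,0,0,0,0,0,0],
[0,0,0,0,0,0,0,0,0,0,0,0,0,0,0,0],
[0,0,0,0,0,0,0,0,0,0,0,0,0,0,0,0],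
[0,0,0,0,0,0,0,0,0,0,0,0,0,0,0,0],
[0,0,0,0,0,0,0,0,0,0,0,0,0,0,0,0],
[0,0,0,0,0,0,0,0,0,0,0,0,0,0,0,0],
[0,0,0,0,0,0,0,0,0,0,0,0,0,0,0,0],
[0,0,0,0,0,0,0,0,0,0,0,0,0,0,0,0],
[0,0,0,0,0,0,0,0,0,0,0,0,0,0,0,0],
[0,0,0,0,0,0,0,0,0,0,0,0,0,0,0,0],
[0,0,0,0,0,0,0,0,0,0,0,0,0,0,0,0],
[0,0,0,0,0,0,0,0,0,0,0,0,0,0,0,0],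
[0,0,0,0,0,0,0,0,0,0,0,0,0,0,0,0],
[0,0,0,0,0,0,0,0,0,0,0,0,0,0,0,0],
[0,0,0,0,0,0,0,0,0,0,0,0,0,0,0,0],
[0,0,0,0,0,0,0,0,0,0,0,0,0,0,0,0]]
def Mpdata : List (List Int) := [[1,0,0,0,0,0,0,0,0,0,0,0,0,0,0,0],
[0,1,0,0,0,0,0,0,0,0,0,0,0,0,0,0],
[0,0,1,0,0,0,0,0,0,0,0,0,0,0,0,0],
[0,0,0,1,0,0,0,0,0,0,0,0,0,0,0,0],
[0,0,0,0,1,0,0,0,0,0,0,0,0,0,0,0],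
[0,0,0,0,0,1,0,0,0,0,0,0,0,0,0,0],
[0,0,0,0,0,0,1,0,0,0,0,0,0,0,0,0],
[0,0,0,0,0,0,0,1,0,0,0,0,0,0,0,0],
[0,0,0,0,0,0,0,0,1,0,0,0,0,0,0,0],
[0,0,0,0,0,0,0,0,0,1,0,0,0,0,0,0],
[0,0,0,0,0,0,0,0,0,0,1,0,0,0,0,0],
[0,0,0,0,0,0,0,0,0,0,0,1,0,0,0,0],
[0,0,0,0,0,0,0,0,0,0,0,0,1,0,0,0],
[0,0,0,0,0,0,0,0,0,0,0,0,0,1,0,0],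
[0,0,0,0,0,0,0,0,0,0,0,0,0,0,1,0],
[0,0,0,0,0,0,0,0,0,0,0,0,0,0,0,1],
[1,1,0,0,0,0,0,0,0,0,0,0,0,0,0,0],
[0,1,1,0,0,0,0,0,0,0,0,0,0,0,0,0],
[0,0,1,1,0,0,0,0,0,0,0,0,0,0,0,0],
[0,0,0,1,1,0,0,0,0,0,0,0,0,0,0,0],
[0,0,0,0,1,1,0,0,0,0,0,0,0,0,0,0],
[0,0,0,0,0,1,1,0,0,0,0,0,0,0,0,0],
[0,0,0,0,0,0,1,1,0,0,0,0,0,0,0,0],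
[1,0,0,0,0,0,0,1,0,0,0,0,0,0,0,0],
[1,0,0,0,0,0,0,0,1,0,0,0,0,0,0,0],
[0,1,0,0,0,0,0,0,0,1,0,0,0,0,0,0],
[0,0,1,0,0,0,0,0,0,0,1,0,0,0,0,0],
[0,0,0,1,0,0,0,0,0,0,0,1,0,0,0,0],
[0,0,0,0,1,0,0,0,0,0,0,0,1,0,0,0],
[0,0,0,0,0,1,0,0,0,0,0,0,0,1,0,0],
[0,0,0,0,0,0,1,0,0,0,0,0,0,0,1,0],
[0,0,0,0,0,0,0,1,0,0,0,0,0,0,0,1],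
[0,0,0,0,0,0,0,0,1,0,0,1,0,0,0,0],
[0,0,0,0,0,0,0,0,0,1,0,0,1,0,0,0],
[0,0,0,0,0,0,0,0,0,0,1,0,0,1,0,0],
[0,0,0,0,0,0,0,0,0,0,0,1,0,0,1,0],
[0,0,0,0,0,0,0,0,0,0,0,0,1,0,0,1],
[0,0,0,0,0,0,0,0,1,0,0,0,0,1,0,0],
[0,0,0,0,0,0,0,0,0,1,0,0,0,0,1,0],
[0,0,0,0,0,0,0,0,0,0,1,0,0,0,0,1]]
def Cndata : List (List Int) := [[-1,0,0,0,0,0,0,-1,-1,0,0,0,0,0,0,0,0,0,0,0,0,0,0,0],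
[-1,-1,0,0,0,0,0,0,0,-1,0,0,0,0,0,0,0,0,0,0,0,0,0,0],
[0,-1,-1,0,0,0,0,0,0,0,-1,0,0,0,0,0,0,0,0,0,0,0,0,0],
[0,0,-1,-1,0,0,0,0,0,0,0,-1,0,0,0,0,0,0,0,0,0,0,0,0],
[0,0,0,-1,-1,0,0,0,0,0,0,0,-1,0,0,0,0,0,0,0,0,0,0,0],
[0,0,0,0,-1,-1,0,0,0,0,0,0,0,-1,0,0,0,0,0,0,0,0,0,0],
[0,0,0,0,0,-1,-1,0,0,0,0,0,0,0,-1,0,0,0,0,0,0,0,0,0],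
[0,0,0,0,0,0,-1,-1,0,0,0,0,0,0,0,-1,0,0,0,0,0,0,0,0],
[0,0,0,0,0,0,0,0,-1,0,0,0,0,0,0,0,-1,0,0,0,0,-1,0,0],
[0,0,0,0,0,0,0,0,0,-1,0,0,0,0,0,0,0,-1,0,0,0,0,-1,0],
[0,0,0,0,0,0,0,0,0,0,-1,0,0,0,0,0,0,0,-1,0,0,0,0,-1],
[0,0,0,0,0,0,0,0,0,0,0,-1,0,0,0,0,-1,0,0,-1,0,0,0,0],
[0,0,0,0,0,0,0,0,0,0,0,0,-1,0,0,0,0,-1,0,0,-1,0,0,0],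
[0,0,0,0,0,0,0,0,0,0,0,0,0,-1,0,0,0,0,-1,0,0,-1,0,0],
[0,0,0,0,0,0,0,0,0,0,0,0,0,0,-1,0,0,0,0,-1,0,0,-1,0],
[0,0,0,0,0,0,0,0,0,0,0,0,0,0,0,-1,0,0,0,0,-1,0,0,-1],
[1,0,0,0,0,0,0,0,0,0,0,0,0,0,0,0,0,0,0,0,0,0,0,0],
[0,1,0,0,0,0,0,0,0,0,0,0,0,0,0,0,0,0,0,0,0,0,0,0],
[0,0,1,0,0,0,0,0,0,0,0,0,0,0,0,0,0,0,0,0,0,0,0,0],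
[0,0,0,1,0,0,0,0,0,0,0,0,0,0,0,0,0,0,0,0,0,0,0,0],
[0,0,0,0,1,0,0,0,0,0,0,0,0,0,0,0,0,0,0,0,0,0,0,0],
[0,0,0,0,0,1,0,0,0,0,0,0,0,0,0,0,0,0,0,0,0,0,0,0],
[0,0,0,0,0,0,1,0,0,0,0,0,0,0,0,0,0,0,0,0,0,0,0,0],
[0,0,0,0,0,0,0,1,0,0,0,0,0,0,0,0,0,0,0,0,0,0,0,0],
[0,0,0,0,0,0,0,0,1,0,0,0,0,0,0,0,0,0,0,0,0,0,0,0],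
[0,0,0,0,0,0,0,0,0,1,0,0,0,0,0,0,0,0,0,0,0,0,0,0],
[0,0,0,0,0,0,0,0,0,0,1,0,0,0,0,0,0,0,0,0,0,0,0,0],
[0,0,0,0,0,0,0,0,0,0,0,1,0,0,0,0,0,0,0,0,0,0,0,0],
[0,0,0,0,0,0,0,0,0,0,0,0,1,0,0,0,0,0,0,0,0,0,0,0],
[0,0,0,0,0,0,0,0,0,0,0,0,0,1,0,0,0,0,0,0,0,0,0,0],
[0,0,0,0,0,0,0,0,0,0,0,0,0,0,1,0,0,0,0,0,0,0,0,0],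
[0,0,0,0,0,0,0,0,0,0,0,0,0,0,0,1,0,0,0,0,0,0,0,0],
[0,0,0,0,0,0,0,0,0,0,0,0,0,0,0,0,1,0,0,0,0,0,0,0],
[0,0,0,0,0,0,0,0,0,0,0,0,0,0,0,0,0,1,0,0,0,0,0,0],
[0,0,0,0,0,0,0,0,0,0,0,0,0,0,0,0,0,0,1,0,0,0,0,0],
[0,0,0,0,0,0,0,0,0,0,0,0,0,0,0,0,0,0,0,1,0,0,0,0],
[0,0,0,0,0,0,0,0,0,0,0,0,0,0,0,0,0,0,0,0,1,0,0,0],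
[0,0,0,0,0,0,0,0,0,0,0,0,0,0,0,0,0,0,0,0,0,1,0,0],
[0,0,0,0,0,0,0,0,0,0,0,0,0,0,0,0,0,0,0,0,0,0,1,0],
[0,0,0,0,0,0,0,0,0,0,0,0,0,0,0,0,0,0,0,0,0,0,0,1]]
def Mndata : List (List Int) := [[0,0,0,0,0,0,0,0,0,0,0,0,0,0,0,0,0,0,0,0,0,0,0,0],
[0,0,0,0,0,0,0,0,0,0,0,0,0,0,0,0,0,0,0,0,0,0,0,0],
[0,0,0,0,0,0,0,0,0,0,0,0,0,0,0,0,0,0,0,0,0,0,0,0],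
[0,0,0,0,0,0,0,0,0,0,0,0,0,0,0,0,0,0,0,0,0,0,0,0],
[0,0,0,0,0,0,0,0,0,0,0,0,0,0,0,0,0,0,0,0,0,0,0,0],
[0,0,0,0,0,0,0,0,0,0,0,0,0,0,0,0,0,0,0,0,0,0,0,0],
[0,0,0,0,0,0,0,0,0,0,0,0,0,0,0,0,0,0,0,0,0,0,0,0],
[0,0,0,0,0,0,0,0,0,0,0,0,0,0,0,0,0,0,0,0,0,0,0,0],
[0,0,0,0,0,0,0,0,0,0,0,0,0,0,0,0,0,0,0,0,0,0,0,0],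
[0,0,0,0,0,0,0,0,0,0,0,0,0,0,0,0,0,0,0,0,0,0,0,0],
[0,0,0,0,0,0,0,0,0,0,0,0,0,0,0,0,0,0,0,0,0,0,0,0],
[0,0,0,0,0,0,0,0,0,0,0,0,0,0,0,0,0,0,0,0,0,0,0,0],
[0,0,0,0,0,0,0,0,0,0,0,0,0,0,0,0,0,0,0,0,0,0,0,0],
[0,0,0,0,0,0,0,0,0,0,0,0,0,0,0,0,0,0,0,0,0,0,0,0],
[0,0,0,0,0,0,0,0,0,0,0,0,0,0,0,0,0,0,0,0,0,0,0,0],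
[0,0,0,0,0,0,0,0,0,0,0,0,0,0,0,0,0,0,0,0,0,0,0,0],
[-1,0,0,0,0,0,0,0,0,0,0,0,0,0,0,0,0,0,0,0,0,0,0,0],
[0,-1,0,0,0,0,0,0,0,0,0,0,0,0,0,0,0,0,0,0,0,0,0,0],
[0,0,-1,0,0,0,0,0,0,0,0,0,0,0,0,0,0,0,0,0,0,0,0,0],
[0,0,0,-1,0,0,0,0,0,0,0,0,0,0,0,0,0,0,0,0,0,0,0,0],
[0,0,0,0,-1,0,0,0,0,0,0,0,0,0,0,0,0,0,0,0,0,0,0,0],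
[0,0,0,0,0,-1,0,0,0,0,0,0,0,0,0,0,0,0,0,0,0,0,0,0],
[0,0,0,0,0,0,-1,0,0,0,0,0,0,0,0,0,0,0,0,0,0,0,0,0],
[0,0,0,0,0,0,0,-1,0,0,0,0,0,0,0,0,0,0,0,0,0,0,0,0],
[0,0,0,0,0,0,0,0,-1,0,0,0,0,0,0,0,0,0,0,0,0,0,0,0],
[0,0,0,0,0,0,0,0,0,-1,0,0,0,0,0,0,0,0,0,0,0,0,0,0],
[0,0,0,0,0,0,0,0,0,0,-1,0,0,0,0,0,0,0,0,0,0,0,0,0],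
[0,0,0,0,0,0,0,0,0,0,0,-1,0,0,0,0,0,0,0,0,0,0,0,0],
[0,0,0,0,0,0,0,0,0,0,0,0,-1,0,0,0,0,0,0,0,0,0,0,0],
[0,0,0,0,0,0,0,0,0,0,0,0,0,-1,0,0,0,0,0,0,0,0,0,0],
[0,0,0,0,0,0,0,0,0,0,0,0,0,0,-1,0,0,0,0,0,0,0,0,0],
[0,0,0,0,0,0,0,0,0,0,0,0,0,0,0,-1,0,0,0,0,0,0,0,0],
[0,0,0,0,0,0,0,0,0,0,0,0,0,0,0,0,-1,0,0,0,0,0,0,0],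
[0,0,0,0,0,0,0,0,0,0,0,0,0,0,0,0,0,-1,0,0,0,0,0,0],
[0,0,0,0,0,0,0,0,0,0,0,0,0,0,0,0,0,0,-1,0,0,0,0,0],
[0,0,0,0,0,0,0,0,0,0,0,0,0,0,0,0,0,0,0,-1,0,0,0,0],
[0,0,0,0,0,0,0,0,0,0,0,0,0,0,0,0,0,0,0,0,-1,0,0,0],
[0,0,0,0,0,0,0,0,0,0,0,0,0,0,0,0,0,0,0,0,0,-1,0,0],
[0,0,0,0,0,0,0,0,0,0,0,0,0,0,0,0,0,0,0,0,0,0,-1,0],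
[0,0,0,0,0,0,0,0,0,0,0,0,0,0,0,0,0,0,0,0,0,0,0,-1]]


def tbl (i : Fin 40) : Finset (ZMod 8 × Fin 2) := tblList.getD i ∅

def entI (L : List (List Int)) (i j : ℕ) : ℤ := (L.getD i []).getD j 0

def Az : Matrix (Fin 40) (Fin 40) ℤ := fun i j => entI Adata i j
def Cpz : Matrix (Fin 40) (Fin 16) ℤ := fun i j => entI Cpdata i j
def Mpz : Matrix (Fin 40) (Fin 16) ℤ := fun i j => entI Mpdata i j
def Cnz : Matrix (Fin 40) (Fin 24) ℤ := fun i j => entI Cndata i j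
def Mnz : Matrix (Fin 40) (Fin 24) ℤ := fun i j => entI Mndata i j

set_option maxRecDepth 100000 in
lemma tbl_isMKSimplex : ∀ i : Fin 40, IsMKSimplex (tbl i) := by decide

/-- The enumeration of the simplices. -/
def gS (i : Fin 40) : MKSimplex := ⟨tbl i, tbl_isMKSimplex i⟩

def idxF (s : Finset (ZMod 8 × Fin 2)) : Fin 40 :=
  ⟨tblList.idxOf s % 40, Nat.mod_lt _ (by norm_num)⟩

def idxS (x : MKSimplex) : Fin 40 := idxF x.val

lemma idx_vertex : ∀ a : ZMod 8 × Fin 2, tbl (idxF {a}) = {a} := by decide +kernel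

lemma idx_edge : ∀ a b : ZMod 8 × Fin 2, mkRel a b = true →
    tbl (idxF {a, b}) = {a, b} := by decide +kernel

lemma idx_gS : ∀ i : Fin 40, idxS (gS i) = i := by decide

lemma tbl_idx (x : MKSimplex) : tbl (idxS x) = x.val := by
  obtain ⟨s, hs⟩ := x
  rcases hs with h1 | ⟨a, b, hab, rfl⟩
  · obtain ⟨a, rfl⟩ := Finset.card_eq_one.mp h1
    exact idx_vertex a
  · exact idx_edge a b hab

/-- The simplices of `MK` are equivalent to `Fin 40`. -/
def eS : Fin 40 ≃ MKSimplex where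
  toFun := gS
  invFun := idxS
  left_inv := idx_gS
  right_inv := fun x => Subtype.ext (tbl_idx x)

set_option maxRecDepth 100000 in
lemma conn_entry : ∀ i j : Fin 40,
    (if (tbl i ∩ tbl j).Nonempty then (1 : ℤ) else 0) = Az i j := by
  exact @of_decide_eq_true _ (@Nat.decidableForallFin 40 _ fun i =>
    @Nat.decidableForallFin 40 _ fun j => inferInstance) rfl

lemma connLR_eq (x y : MKSimplex) :
    connLR x y = ((Az (eS.symm x) (eS.symm y) : ℤ) : ℝ) := by
  have hx : x.val = tbl (eS.symm x) := congrArg Subtype.val (eS.apply_symm_apply x).symm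
  have hy : y.val = tbl (eS.symm y) := congrArg Subtype.val (eS.apply_symm_apply y).symm
  rw [connLR, hx, hy, ← conn_entry]
  split_ifs <;> simp

set_option maxRecDepth 100000 in
lemma hMp : Az * Cpz = Mpz := by decide
set_option maxRecDepth 100000 in
lemma hMn : Az * Cnz = Mnz := by decide
set_option maxRecDepth 100000 in
lemma hIp : Cpzᵀ * Mpz = 1 := by decide
set_option maxRecDepth 100000 in
lemma hIn : Cnzᵀ * Mnz = -1 := by decide

noncomputable def AR : Matrix (Fin 40) (Fin 40) ℝ := Az.map ⇑(Int.castRingHom ℝ)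
noncomputable def CpR : Matrix (Fin 40) (Fin 16) ℝ := Cpz.map ⇑(Int.castRingHom ℝ)
noncomputable def CnR : Matrix (Fin 40) (Fin 24) ℝ := Cnz.map ⇑(Int.castRingHom ℝ)

lemma hIpR : CpRᵀ * (AR * CpR) = 1 := by
  have h : ((Cpzᵀ * (Az * Cpz)).map ⇑(Int.castRingHom ℝ))
      = (1 : Matrix (Fin 16) (Fin 16) ℤ).map ⇑(Int.castRingHom ℝ) := by
    rw [← Matrix.mul_assoc, Matrix.mul_assoc, hMp, hIp]
  rw [Matrix.map_mul, Matrix.map_mul, Matrix.transpose_map,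
    Matrix.map_one _ (map_zero _) (map_one _)] at h
  exact h
lemma hInR : CnRᵀ * (AR * CnR) = -1 := by
  have h : ((Cnzᵀ * (Az * Cnz)).map ⇑(Int.castRingHom ℝ))
      = (-1 : Matrix (Fin 24) (Fin 24) ℤ).map ⇑(Int.castRingHom ℝ) := by
    rw [← Matrix.mul_assoc, Matrix.mul_assoc, hMn, hIn]
  rw [Matrix.map_mul, Matrix.map_mul, Matrix.transpose_map] at h
  have h1 : (-1 : Matrix (Fin 24) (Fin 24) ℤ).map ⇑(Int.castRingHom ℝ) = -1 := by
    ext i j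
    by_cases hij : i = j <;> simp [Matrix.map_apply, Matrix.one_apply, hij]
  rw [h1] at h
  exact h

end Data

section Spectral

/-- The quadratic form of a real symmetric matrix in eigencoordinates. -/
lemma quad_eq_sum_eigen {N : Type*} [Fintype N] [DecidableEq N]
    {A : Matrix N N ℝ} (hA : A.IsHermitian) (x : N → ℝ) :
    x ⬝ᵥ (A *ᵥ x) = ∑ i, hA.eigenvalues i *
      (((hA.eigenvectorUnitary : Matrix N N ℝ)ᴴ *ᵥ x) i *
       ((hA.eigenvectorUnitary : Matrix N N ℝ)ᴴ *ᵥ x) i) := by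
  set U : Matrix N N ℝ := (hA.eigenvectorUnitary : Matrix N N ℝ) with hU
  have hxU : x ᵥ* U = Uᴴ *ᵥ x := by
    rw [Matrix.conjTranspose_eq_transpose_of_trivial, Matrix.mulVec_transpose]
  conv_lhs => rw [hA.spectral_theorem]
  rw [Unitary.conjStarAlgAut_apply]
  rw [← hU, ← Matrix.mulVec_mulVec, ← Matrix.mulVec_mulVec, Matrix.dotProduct_mulVec, hxU,
    RCLike.ofReal_real_eq_id]
  rw [Matrix.star_eq_conjTranspose]
  simp only [dotProduct, Matrix.mulVec_diagonal, Function.comp_apply, id_eq]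
  exact Finset.sum_congr rfl fun i _ => by ring

lemma inertia_pos_le {N M : Type*} [Fintype N] [Fintype M] [DecidableEq N]
    {A : Matrix N N ℝ} (hA : A.IsHermitian) (B : Matrix N M ℝ)
    (hB : ∀ y : M → ℝ, y ≠ 0 → 0 < (B *ᵥ y) ⬝ᵥ (A *ᵥ (B *ᵥ y))) :
    Fintype.card M ≤ Fintype.card {i : N // 0 < hA.eigenvalues i} := by
  classical
  set U : Matrix N N ℝ := (hA.eigenvectorUnitary : Matrix N N ℝ) with hU
  let φ : (M → ℝ) →ₗ[ℝ] ({i : N // 0 < hA.eigenvalues i} → ℝ) :=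
    (LinearMap.funLeft ℝ ℝ (Subtype.val)).comp ((Uᴴ).mulVecLin.comp B.mulVecLin)
  have hinj : Function.Injective φ := by
    rw [injective_iff_map_eq_zero]
    intro y hy
    by_contra h0
    have hq := hB y h0
    have hc : ∀ i : N, 0 < hA.eigenvalues i → (Uᴴ *ᵥ (B *ᵥ y)) i = 0 := by
      intro i hi
      have h := congrFun hy ⟨i, hi⟩
      simp only [φ, LinearMap.comp_apply, Matrix.mulVecLin_apply, LinearMap.funLeft_apply,
        Pi.zero_apply] at h
      exact h
    have hle : (B *ᵥ y) ⬝ᵥ (A *ᵥ (B *ᵥ y)) ≤ 0 := by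
      rw [quad_eq_sum_eigen hA]
      apply Finset.sum_nonpos
      intro i _
      by_cases hi : 0 < hA.eigenvalues i
      · rw [← hU, hc i hi]; ring_nf; simp
      · push_neg at hi
        rw [← hU]
        nlinarith [mul_self_nonneg ((Uᴴ *ᵥ (B *ᵥ y)) i)]
    linarith
  calc Fintype.card M = Module.finrank ℝ (M → ℝ) := (Module.finrank_fintype_fun_eq_card ℝ).symm
    _ ≤ Module.finrank ℝ ({i : N // 0 < hA.eigenvalues i} → ℝ) :=
        LinearMap.finrank_le_finrank_of_injective hinj
    _ = Fintype.card {i : N // 0 < hA.eigenvalues i} := Module.finrank_fintype_fun_eq_card ℝ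

lemma inertia_neg_le {N M : Type*} [Fintype N] [Fintype M] [DecidableEq N]
    {A : Matrix N N ℝ} (hA : A.IsHermitian) (B : Matrix N M ℝ)
    (hB : ∀ y : M → ℝ, y ≠ 0 → (B *ᵥ y) ⬝ᵥ (A *ᵥ (B *ᵥ y)) < 0) :
    Fintype.card M ≤ Fintype.card {i : N // hA.eigenvalues i < 0} := by
  classical
  set U : Matrix N N ℝ := (hA.eigenvectorUnitary : Matrix N N ℝ) with hU
  let φ : (M → ℝ) →ₗ[ℝ] ({i : N // hA.eigenvalues i < 0} → ℝ) :=
    (LinearMap.funLeft ℝ ℝ (Subtype.val)).comp ((Uᴴ).mulVecLin.comp B.mulVecLin)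
  have hinj : Function.Injective φ := by
    rw [injective_iff_map_eq_zero]
    intro y hy
    by_contra h0
    have hq := hB y h0
    have hc : ∀ i : N, hA.eigenvalues i < 0 → (Uᴴ *ᵥ (B *ᵥ y)) i = 0 := by
      intro i hi
      have h := congrFun hy ⟨i, hi⟩
      simp only [φ, LinearMap.comp_apply, Matrix.mulVecLin_apply, LinearMap.funLeft_apply,
        Pi.zero_apply] at h
      exact h
    have hle : 0 ≤ (B *ᵥ y) ⬝ᵥ (A *ᵥ (B *ᵥ y)) := by
      rw [quad_eq_sum_eigen hA]
      apply Finset.sum_nonneg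
      intro i _
      by_cases hi : hA.eigenvalues i < 0
      · rw [← hU, hc i hi]; ring_nf; simp
      · push_neg at hi
        rw [← hU]
        nlinarith [mul_self_nonneg ((Uᴴ *ᵥ (B *ᵥ y)) i)]
    linarith
  calc Fintype.card M = Module.finrank ℝ (M → ℝ) := (Module.finrank_fintype_fun_eq_card ℝ).symm
    _ ≤ Module.finrank ℝ ({i : N // hA.eigenvalues i < 0} → ℝ) :=
        LinearMap.finrank_le_finrank_of_injective hinj
    _ = Fintype.card {i : N // hA.eigenvalues i < 0} := Module.finrank_fintype_fun_eq_card ℝ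

end Spectral

section Main

lemma connLR_herm : connLR.IsHermitian := by
  rw [Matrix.IsHermitian, Matrix.conjTranspose_eq_transpose_of_trivial]
  ext x y
  show connLR y x = connLR x y
  rw [connLR, connLR, Finset.inter_comm]

/-- Transport of the quadratic form along the enumeration. -/
lemma quad_transport (u : Fin 40 → ℝ) :
    (fun s : MKSimplex => u (eS.symm s)) ⬝ᵥ (connLR *ᵥ (fun s => u (eS.symm s)))
      = u ⬝ᵥ (AR *ᵥ u) := by
  have hmv : ∀ s : MKSimplex, (connLR *ᵥ (fun t => u (eS.symm t))) s = (AR *ᵥ u) (eS.symm s) := by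
    intro s
    show (∑ t : MKSimplex, connLR s t * u (eS.symm t)) = ∑ k, AR (eS.symm s) k * u k
    rw [← Equiv.sum_comp eS.symm (fun k => AR (eS.symm s) k * u k)]
    refine Finset.sum_congr rfl fun t _ => ?_
    rw [connLR_eq s t]
    rfl
  show (∑ s : MKSimplex, u (eS.symm s) * (connLR *ᵥ (fun t => u (eS.symm t))) s) = _
  rw [Finset.sum_congr rfl fun s _ => by rw [hmv s]]
  exact Equiv.sum_comp eS.symm (fun k => u k * (AR *ᵥ u) k)

lemma dot_self_pos {k : ℕ} {y : Fin k → ℝ} (hy : y ≠ 0) : 0 < y ⬝ᵥ y := by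
  rcases Function.ne_iff.mp hy with ⟨i, hi⟩
  have hyi : y i ≠ 0 := by simpa using hi
  calc (0:ℝ) < y i * y i := mul_self_pos.mpr hyi
    _ ≤ y ⬝ᵥ y := by
        rw [dotProduct]
        exact Finset.single_le_sum (f := fun j => y j * y j)
          (fun j _ => mul_self_nonneg _) (Finset.mem_univ i)

/-- The connection matrix of the Möbius–Kantor graph has exactly 16 positive and 24
negative eigenvalues and no zero eigenvalue; its signature `16 - 24 = -8` is the Euler
characteristic `|V| - |E|` of `MK`. -/
theorem connection_matrix_signature_moebiusKantor :
    ∃ hH : connLR.IsHermitian,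
      {i : MKSimplex | 0 < hH.eigenvalues i}.ncard = 16 ∧
      {i : MKSimplex | hH.eigenvalues i < 0}.ncard = 24 ∧
      (∀ i : MKSimplex, hH.eigenvalues i ≠ 0) ∧
      (16 : ℤ) - 24 =
        (Fintype.card (ZMod 8 × Fin 2) : ℤ) - MK.edgeFinset.card := by
  classical
  refine ⟨connLR_herm, ?_⟩
  set ev := connLR_herm.eigenvalues with hev
  -- the two semidefinite subspaces
  have hpos : ∀ y : Fin 16 → ℝ, y ≠ 0 →
      0 < ((fun s : MKSimplex => (CpR *ᵥ y) (eS.symm s)) ⬝ᵥ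
        (connLR *ᵥ (fun s => (CpR *ᵥ y) (eS.symm s)))) := by
    intro y hy
    rw [quad_transport (CpR *ᵥ y)]
    have : (CpR *ᵥ y) ⬝ᵥ (AR *ᵥ (CpR *ᵥ y)) = y ⬝ᵥ y := by
      rw [Matrix.mulVec_mulVec, dotProduct_comm, Matrix.dotProduct_mulVec,
        ← Matrix.mulVec_transpose, Matrix.mulVec_mulVec, ← Matrix.mul_assoc,
        Matrix.mul_assoc, hIpR]
      simp
    rw [this]
    exact dot_self_pos hy
  have hneg : ∀ y : Fin 24 → ℝ, y ≠ 0 →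
      ((fun s : MKSimplex => (CnR *ᵥ y) (eS.symm s)) ⬝ᵥ
        (connLR *ᵥ (fun s => (CnR *ᵥ y) (eS.symm s)))) < 0 := by
    intro y hy
    rw [quad_transport (CnR *ᵥ y)]
    have : (CnR *ᵥ y) ⬝ᵥ (AR *ᵥ (CnR *ᵥ y)) = -(y ⬝ᵥ y) := by
      rw [Matrix.mulVec_mulVec, dotProduct_comm, Matrix.dotProduct_mulVec,
        ← Matrix.mulVec_transpose, Matrix.mulVec_mulVec, ← Matrix.mul_assoc,
        Matrix.mul_assoc, hInR]
      rw [Matrix.neg_mulVec, Matrix.one_mulVec, neg_dotProduct]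
    rw [this]
    have := dot_self_pos hy
    linarith
  -- lower bounds on eigenvalue counts
  have hp : 16 ≤ Fintype.card {i : MKSimplex // 0 < ev i} := by
    have := inertia_pos_le connLR_herm (fun s j => CpR (eS.symm s) j) ?_
    · simpa using this
    · intro y hy; exact hpos y hy
  have hn : 24 ≤ Fintype.card {i : MKSimplex // ev i < 0} := by
    have := inertia_neg_le connLR_herm (fun s j => CnR (eS.symm s) j) ?_
    · simpa using this
    · intro y hy; exact hneg y hy
  have hcard40 : Fintype.card MKSimplex = 40 :=
    (Fintype.card_congr eS.symm).trans (Fintype.card_fin 40)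
  set P : Finset MKSimplex := Finset.univ.filter (fun i => 0 < ev i) with hP
  set Nf : Finset MKSimplex := Finset.univ.filter (fun i => ev i < 0) with hNf
  have hpP : Fintype.card {i : MKSimplex // 0 < ev i} = P.card := Fintype.card_subtype _
  have hnN : Fintype.card {i : MKSimplex // ev i < 0} = Nf.card := Fintype.card_subtype _
  have hdisj : Disjoint P Nf := by
    rw [Finset.disjoint_left]
    intro a ha hb
    rw [hP, Finset.mem_filter] at ha
    rw [hNf, Finset.mem_filter] at hb
    exact absurd hb.2 (not_lt.mpr ha.2.le)
  have hUnion : (P ∪ Nf).card = P.card + Nf.card := Finset.card_union_of_disjoint hdisj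
  have hle40 : P.card + Nf.card ≤ 40 := by
    rw [← hUnion]
    calc (P ∪ Nf).card ≤ Finset.univ.card := Finset.card_le_univ _
      _ = 40 := hcard40
  have hPcard : P.card = 16 ∧ Nf.card = 24 := by
    rw [hpP] at hp; rw [hnN] at hn
    omega
  have hzero : ∀ i : MKSimplex, ev i ≠ 0 := by
    intro i hi
    have hiP : i ∉ P := by
      rw [hP, Finset.mem_filter]; rintro ⟨-, h⟩; rw [hi] at h; exact lt_irrefl _ h
    have hiN : i ∉ Nf := by
      rw [hNf, Finset.mem_filter]; rintro ⟨-, h⟩; rw [hi] at h; exact lt_irrefl _ h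
    have hsub : P ∪ Nf ⊆ Finset.univ.erase i := by
      intro j hj
      rw [Finset.mem_erase]
      refine ⟨fun hji => ?_, Finset.mem_univ _⟩
      subst hji
      rcases Finset.mem_union.mp hj with h | h
      exacts [hiP h, hiN h]
    have h39 : (P ∪ Nf).card ≤ 39 := by
      calc (P ∪ Nf).card ≤ (Finset.univ.erase i).card := Finset.card_le_card hsub
        _ = Fintype.card MKSimplex - 1 := by
            rw [Finset.card_erase_of_mem (Finset.mem_univ _), Finset.card_univ]
        _ = 39 := by rw [hcard40]
    rw [hUnion, hPcard.1, hPcard.2] at h39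
    omega
  have hncardP : {i : MKSimplex | 0 < ev i}.ncard = 16 := by
    rw [Set.ncard_eq_toFinset_card', Set.toFinset_setOf]
    exact hPcard.1
  have hncardN : {i : MKSimplex | ev i < 0}.ncard = 24 := by
    rw [Set.ncard_eq_toFinset_card', Set.toFinset_setOf]
    exact hPcard.2
  have hedge : MK.edgeFinset.card = 24 := by
    have h2 := MK.sum_degrees_eq_twice_card_edges
    have hdeg : ∑ v, MK.degree v = 48 := by decide
    omega
  refine ⟨hncardP, hncardN, hzero, ?_⟩
  have hV : Fintype.card (ZMod 8 × Fin 2) = 16 := by decide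
  rw [hV, hedge]
  norm_num

end Main
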